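/- Theorem 1, item (iii) (dwell-time supervisor, disturbance-free convergence). Consider supervisor data and a supervised output trajectory (y, v, (t_j), (q_j)) with disturbance bound v ≡ 0 (no disturbances), and assume there is T_min > 0 with t_{j+1} − t_j ≥ T_min for all consecutive switching times. Then the switching sequence is finite, and there exists a class-KL function β̄⁰ such that y(t) ≤ β̄⁰(y(0), t) for all t ≥ 0; in particular y(t) → 0 as t → ∞. -/
import Mathlib


open Set Filter

/-- A class-`K` function: continuous, strictly increasing on `[0,∞)`, vanishing at `0`. -/
def ClassK (γ : ℝ → ℝ) : Prop :=
  ContinuousOn γ (Ici 0) ∧ StrictMonoOn γ (Ici 0) ∧ γ 0 = 0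

/-- A class-`KL` function: class `K` in the first argument for every fixed second argument
`t ≥ 0`, and (for every fixed `s > 0`) continuous, strictly decreasing and tending to `0`
at `+∞` in the second argument. -/
def ClassKL (β : ℝ → ℝ → ℝ) : Prop :=
  (∀ t ≥ (0:ℝ), ClassK (fun s => β s t)) ∧
  ∀ s > (0:ℝ), ContinuousOn (β s) (Ici 0) ∧ StrictAntiOn (β s) (Ici 0) ∧
    Tendsto (β s) atTop (nhds 0)

/-- Supervisor data: number of thresholds `M ≥ 1`, thresholds
`0 = Δ 0 < Δ 1 < ⋯ < Δ M`, class-`KL` bounds `β q` with `β q s 0 > s` for `s > 0` and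
`β q (Δ (q+1)) 0 ≤ Δ (q+2)` whenever `q+2 ≤ M`, and inverses `χ q` of `s ↦ β q s 0`. -/
structure SupervisorData where
  M : ℕ
  Δ : ℕ → ℝ
  β : ℕ → ℝ → ℝ → ℝ
  χ : ℕ → ℝ → ℝ
  hM : 1 ≤ M
  hΔ0 : Δ 0 = 0
  hΔlt : ∀ q < M, Δ q < Δ (q + 1)
  hβKL : ∀ q ≤ M, ClassKL (β q)
  hβgt : ∀ q ≤ M, ∀ s > (0:ℝ), s < β q s 0
  hβΔ : ∀ q, q + 2 ≤ M → β q (Δ (q + 1)) 0 ≤ Δ (q + 2)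
  hχ : ∀ q ≤ M, ∀ s ≥ (0:ℝ), 0 ≤ χ q s ∧ β q (χ q s) 0 = s

/-- A supervised output trajectory (dwell-time supervisor) with disturbance bound `v`:
a continuous nonnegative output `y` on `[0,∞)`, a nondecreasing nonnegative disturbance
bound `v`, switching times `t 0 = 0 < t 1 < ⋯` (finite with last index `N` when `N ≠ ⊤`,
in which case `t` is only constrained up to `N` and the last interval is `[t N, ∞)`;
infinite with `t j → ∞` when `N = ⊤`), and modes `q j ≤ M` with `q (j+1) ≠ q j`,
satisfying the initial, switching and inter-switch SIIOS output conditions. -/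
structure SupTraj (D : SupervisorData) where
  y : ℝ → ℝ
  v : ℝ → ℝ
  t : ℕ → ℝ
  q : ℕ → ℕ
  N : ℕ∞
  hy_cont : ContinuousOn y (Ici 0)
  hy_nonneg : ∀ s ≥ (0:ℝ), 0 ≤ y s
  hv_mono : MonotoneOn v (Ici 0)
  hv_nonneg : ∀ s ≥ (0:ℝ), 0 ≤ v s
  ht0 : t 0 = 0
  ht_lt : ∀ j : ℕ, ((j + 1 : ℕ) : ℕ∞) ≤ N → t j < t (j + 1)
  ht_top : N = ⊤ → Tendsto t atTop atTop
  hq_le : ∀ j : ℕ, (j : ℕ∞) ≤ N → q j ≤ D.M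
  hq_ne : ∀ j : ℕ, ((j + 1 : ℕ) : ℕ∞) ≤ N → q (j + 1) ≠ q j
  h_init_lo : D.Δ (q 0) ≤ y 0
  h_init_hi : q 0 < D.M → y 0 < D.Δ (q 0 + 1)
  h_switch_lt : ∀ j : ℕ, 1 ≤ j → (j : ℕ∞) ≤ N → q j < D.M →
    D.Δ (q j) ≤ y (t j) ∧ y (t j) ≤ D.χ (q j) (D.Δ (q j + 1))
  h_switch_top : ∀ j : ℕ, 1 ≤ j → (j : ℕ∞) ≤ N → q j = D.M →
    D.Δ D.M ≤ y (t j) ∧ y (t j) ≤ D.Δ D.M + v (t j)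
  h_bound : ∀ j : ℕ, (j : ℕ∞) ≤ N → ∀ s : ℝ, t j ≤ s →
    (((j + 1 : ℕ) : ℕ∞) ≤ N → s ≤ t (j + 1)) →
    y s ≤ D.β (q j) (y (t j)) (s - t j) + v s


section Helpers

lemma beta_zero (D : SupervisorData) {q : ℕ} (hq : q ≤ D.M) {t : ℝ} (ht : 0 ≤ t) :
    D.β q 0 t = 0 := ((D.hβKL q hq).1 t ht).2.2

lemma beta_nonneg (D : SupervisorData) {q : ℕ} (hq : q ≤ D.M) {s t : ℝ}
    (hs : 0 ≤ s) (ht : 0 ≤ t) : 0 ≤ D.β q s t := by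
  have h := ((D.hβKL q hq).1 t ht)
  have := h.2.1.monotoneOn (Set.self_mem_Ici) (Set.mem_Ici.mpr hs) hs
  simpa [h.2.2] using this

lemma Delta_lt (D : SupervisorData) : ∀ {a b : ℕ}, a < b → b ≤ D.M → D.Δ a < D.Δ b := by
  intro a b
  induction b with
  | zero => omega
  | succ n ih =>
    intro hab hb
    rcases Nat.lt_succ_iff_lt_or_eq.mp hab with h | h
    · exact (ih h (by omega)).trans (D.hΔlt n (by omega))
    · subst h; exact D.hΔlt a (by omega)

lemma Delta_pos (D : SupervisorData) {q : ℕ} (h1 : 1 ≤ q) (hq : q ≤ D.M) :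
    0 < D.Δ q := by
  have := Delta_lt D (show 0 < q by omega) hq
  simpa [D.hΔ0] using this

lemma Delta_nonneg (D : SupervisorData) {q : ℕ} (hq : q ≤ D.M) : 0 ≤ D.Δ q := by
  rcases Nat.eq_zero_or_pos q with h | h
  · simp [h, D.hΔ0]
  · exact (Delta_pos D h hq).le

/-- Construction of the class-KL bound from: a bound `K` on `[0,T]` and a decaying
bound `B (· - T)` on `[T, ∞)`. -/
lemma aux_KL (y : ℝ → ℝ) (hy0 : 0 < y 0) (hynn : ∀ s, 0 ≤ s → 0 ≤ y s)
    (B : ℝ → ℝ) (T K : ℝ) (hT : 0 ≤ T)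
    (hBc : ContinuousOn B (Ici 0)) (hBa : AntitoneOn B (Ici 0))
    (hBn : ∀ τ, 0 ≤ τ → 0 ≤ B τ) (hBt : Tendsto B atTop (nhds 0))
    (hK : ∀ s, 0 ≤ s → s ≤ T → y s ≤ K)
    (hB : ∀ s, T ≤ s → y s ≤ B (s - T)) :
    (∃ β0 : ℝ → ℝ → ℝ, ClassKL β0 ∧ ∀ s ≥ (0:ℝ), y s ≤ β0 (y 0) s) ∧
    Tendsto y atTop (nhds 0) := by
  set K' : ℝ := max K 0 with hK'
  set c : ℝ → ℝ := fun t => B (max (t - T) 0) + (K' + 1) * Real.exp (T - t) with hc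
  have hK'0 : 0 ≤ K' := le_max_right _ _
  have hcpos : ∀ t, 0 < c t := by
    intro t
    have h1 := hBn _ (le_max_right (t - T) 0)
    have h2 : 0 < (K' + 1) * Real.exp (T - t) := by positivity
    simp only [hc]; linarith
  have hyc : ∀ s, 0 ≤ s → y s ≤ c s := by
    intro s hs
    have hBnn := hBn _ (le_max_right (s - T) 0)
    rcases le_total s T with h | h
    · have h1 : y s ≤ K' := (hK s hs h).trans (le_max_left _ _)
      have h2 : (1:ℝ) ≤ Real.exp (T - s) := Real.one_le_exp (by linarith)
      have h3 : K' + 1 ≤ (K' + 1) * Real.exp (T - s) :=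
        le_mul_of_one_le_right (by linarith) h2
      simp only [hc]; linarith
    · have h1 : y s ≤ B (max (s - T) 0) := by
        rw [max_eq_left (by linarith : (0:ℝ) ≤ s - T)]
        exact hB s h
      have h2 : 0 < (K' + 1) * Real.exp (T - s) := by positivity
      simp only [hc]; linarith
  have hcc : ContinuousOn c (Ici 0) := by
    apply ContinuousOn.add
    · exact hBc.comp ((continuous_id.sub continuous_const).max continuous_const).continuousOn
        (fun x _ => Set.mem_Ici.mpr (le_max_right _ _))
    · exact (continuous_const.mul
        (Real.continuous_exp.comp (continuous_const.sub continuous_id))).continuousOn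
  have hca : StrictAntiOn c (Ici 0) := by
    intro a _ b _ hab
    have h1 : B (max (b - T) 0) ≤ B (max (a - T) 0) :=
      hBa (Set.mem_Ici.mpr (le_max_right _ _)) (Set.mem_Ici.mpr (le_max_right _ _))
        (max_le_max (by linarith) le_rfl)
    have h2 : Real.exp (T - b) < Real.exp (T - a) := Real.exp_lt_exp.mpr (by linarith)
    have h3 := mul_lt_mul_of_pos_left h2 (show (0:ℝ) < K' + 1 by linarith)
    simp only [hc]; linarith
  have hct : Tendsto c atTop (nhds 0) := by
    have t1 : Tendsto (fun t : ℝ => max (t - T) 0) atTop atTop := by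
      refine tendsto_atTop.mpr fun b => eventually_atTop.mpr ⟨b + T, fun t ht => ?_⟩
      exact le_trans (by linarith) (le_max_left _ _)
    have t2 : Tendsto (fun t : ℝ => B (max (t - T) 0)) atTop (nhds 0) := hBt.comp t1
    have tin : Tendsto (fun t : ℝ => T - t) atTop atBot := by
      refine tendsto_atBot.mpr fun b => eventually_atTop.mpr ⟨T - b, fun t ht => by linarith⟩
    have t3 : Tendsto (fun t : ℝ => (K' + 1) * Real.exp (T - t)) atTop (nhds 0) := by
      have := (Real.tendsto_exp_atBot.comp tin).const_mul (K' + 1)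
      simpa using this
    simpa using t2.add t3
  have hy0' : y 0 ≠ 0 := ne_of_gt hy0
  refine ⟨⟨fun a t => a * (c t / y 0), ?_, ?_⟩, ?_⟩
  · constructor
    · intro t _
      refine ⟨(continuous_id.mul continuous_const).continuousOn, ?_, by simp⟩
      intro a _ b _ hab
      exact mul_lt_mul_of_pos_right hab (div_pos (hcpos t) hy0)
    · intro s hs
      refine ⟨continuousOn_const.mul (hcc.div_const _), ?_, ?_⟩
      · intro a ha b hb hab
        have h1 := hca ha hb hab
        have : c b / y 0 < c a / y 0 := by gcongr
        exact mul_lt_mul_of_pos_left this hs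
      · have := (hct.div_const (y 0)).const_mul s
        simpa using this
  · intro s hs
    have h1 := hyc s hs
    have h2 : y 0 * (c s / y 0) = c s := by
      rw [mul_comm, div_mul_cancel₀ _ hy0']
    linarith [h2 ▸ h1]
  · refine squeeze_zero' (eventually_atTop.mpr ⟨0, fun s hs => hynn s hs⟩)
      (eventually_atTop.mpr ⟨0, fun s hs => hyc s hs⟩) hct

end Helpers

/-- **Theorem 1(iii)** (dwell-time supervisor, disturbance-free convergence):
if `v ≡ 0` and the switching times are separated by a dwell time `Tmin > 0`, then the
switching sequence is finite and there is a class-`KL` function `β̄⁰` with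
`y t ≤ β̄⁰ (y 0) t` for all `t ≥ 0`; in particular `y t → 0` as `t → ∞`. -/
theorem thm1_iii (D : SupervisorData) (Tr : SupTraj D)
    (hv : ∀ s : ℝ, Tr.v s = 0)
    (Tmin : ℝ) (hTmin : 0 < Tmin)
    (hdwell : ∀ j : ℕ, ((j + 1 : ℕ) : ℕ∞) ≤ Tr.N → Tr.t j + Tmin ≤ Tr.t (j + 1)) :
    Tr.N ≠ ⊤ ∧
    (∃ β0 : ℝ → ℝ → ℝ, ClassKL β0 ∧ ∀ s ≥ (0:ℝ), Tr.y s ≤ β0 (Tr.y 0) s) ∧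
    Filter.Tendsto Tr.y Filter.atTop (nhds 0) := by
  clear hdwell hTmin
  -- time nonnegativity
  have htnn : ∀ j : ℕ, (j : ℕ∞) ≤ Tr.N → 0 ≤ Tr.t j := by
    intro j
    induction j with
    | zero => intro _; simp [Tr.ht0]
    | succ j ih =>
      intro h
      have hj : (j : ℕ∞) ≤ Tr.N := le_trans (by exact_mod_cast Nat.le_succ j) h
      exact (ih hj).trans (Tr.ht_lt j h).le
  -- mode strictly decreases after the first switch
  have hmode : ∀ j : ℕ, 1 ≤ j → ((j + 1 : ℕ) : ℕ∞) ≤ Tr.N → Tr.q (j + 1) < Tr.q j := by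
    intro j hj1 h
    have hjN : (j : ℕ∞) ≤ Tr.N := le_trans (by exact_mod_cast Nat.le_succ j) h
    have hqj : Tr.q j ≤ D.M := Tr.hq_le j hjN
    have hqj1 : Tr.q (j + 1) ≤ D.M := Tr.hq_le _ h
    have hne := Tr.hq_ne j h
    rcases eq_or_lt_of_le hqj with hM | hlt
    · exact lt_of_le_of_ne (hM ▸ hqj1) hne
    · obtain ⟨hlo, hhi⟩ := Tr.h_switch_lt j hj1 hjN hlt
      have hq1M : Tr.q j + 1 ≤ D.M := hlt
      have hΔpos : 0 < D.Δ (Tr.q j + 1) := Delta_pos D (by omega) hq1M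
      obtain ⟨hx0, hxβ⟩ := D.hχ (Tr.q j) hqj (D.Δ (Tr.q j + 1)) hΔpos.le
      set x := D.χ (Tr.q j) (D.Δ (Tr.q j + 1)) with hxdef
      have hxpos : 0 < x := by
        rcases hx0.lt_or_eq with h' | h'
        · exact h'
        · exfalso
          rw [← h', beta_zero D hqj le_rfl] at hxβ
          linarith
      have hτ : 0 < Tr.t (j + 1) - Tr.t j := by
        have := Tr.ht_lt j h; linarith
      have hb := Tr.h_bound j hjN (Tr.t (j + 1)) (Tr.ht_lt j h).le (fun _ => le_rfl)
      rw [hv] at hb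
      have hb1 : D.β (Tr.q j) (Tr.y (Tr.t j)) (Tr.t (j + 1) - Tr.t j)
          ≤ D.β (Tr.q j) x (Tr.t (j + 1) - Tr.t j) := by
        have hK := ((D.hβKL (Tr.q j) hqj).1 _ hτ.le).2.1.monotoneOn
        exact hK (Set.mem_Ici.mpr (Tr.hy_nonneg _ (htnn j hjN))) (Set.mem_Ici.mpr hx0) hhi
      have hb2 : D.β (Tr.q j) x (Tr.t (j + 1) - Tr.t j) < D.β (Tr.q j) x 0 :=
        ((D.hβKL (Tr.q j) hqj).2 x hxpos).2.1 Set.self_mem_Ici (Set.mem_Ici.mpr hτ.le) hτ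
      have hy1 : Tr.y (Tr.t (j + 1)) < D.Δ (Tr.q j + 1) := by
        rw [hxβ] at hb2; linarith
      have hlow : D.Δ (Tr.q (j + 1)) ≤ Tr.y (Tr.t (j + 1)) := by
        rcases lt_or_eq_of_le hqj1 with h' | h'
        · exact (Tr.h_switch_lt (j + 1) (by omega) h h').1
        · have := (Tr.h_switch_top (j + 1) (by omega) h h').1
          rwa [← h'] at this
      have hqlt : Tr.q (j + 1) < Tr.q j + 1 := by
        by_contra hcon
        push_neg at hcon
        have : D.Δ (Tr.q j + 1) ≤ D.Δ (Tr.q (j + 1)) := by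
          rcases eq_or_lt_of_le hcon with h' | h'
          · rw [h']
          · exact (Delta_lt D h' hqj1).le
        linarith
      omega
  -- finiteness of the switching sequence
  have hNtop : Tr.N ≠ ⊤ := by
    intro htop
    have key : ∀ j : ℕ, Tr.q (j + 1 + 1) < Tr.q (j + 1) := by
      intro j
      exact hmode (j + 1) (by omega) (by rw [htop]; exact le_top)
    have hdesc : ∀ j : ℕ, Tr.q (j + 1) + j ≤ Tr.q 1 := by
      intro j
      induction j with
      | zero => simp
      | succ j ih => have := key j; omega
    have := hdesc (Tr.q 1 + 1)
    omega
  refine ⟨hNtop, ?_⟩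
  obtain ⟨n, hn⟩ := WithTop.ne_top_iff_exists.mp hNtop
  have hnN : (n : ℕ∞) ≤ Tr.N := hn.le
  have hnot : ¬ ((n + 1 : ℕ) : ℕ∞) ≤ Tr.N := by
    rw [← hn]
    exact fun h => Nat.not_succ_le_self n (Nat.cast_le.mp h)
  set T := Tr.t n with hTdef
  have hT0 : 0 ≤ T := htnn n hnN
  have hm : Tr.q n ≤ D.M := Tr.hq_le n hnN
  have hbd : ∀ s, T ≤ s → Tr.y s ≤ D.β (Tr.q n) (Tr.y T) (s - T) := by
    intro s hs
    have := Tr.h_bound n hnN s hs (fun h => absurd h hnot)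
    simpa [hv] using this
  rcases (Tr.hy_nonneg 0 le_rfl).lt_or_eq with hy0 | hy0
  · -- y 0 > 0 : use aux_KL
    obtain ⟨xK, hxK, hKmax⟩ := (isCompact_Icc (a := (0:ℝ)) (b := T)).exists_isMaxOn
      ⟨0, Set.left_mem_Icc.mpr hT0⟩ (Tr.hy_cont.mono (Set.Icc_subset_Ici_self))
    set K := Tr.y xK with hKdef
    have hKbd : ∀ s, 0 ≤ s → s ≤ T → Tr.y s ≤ K := fun s h1 h2 => hKmax ⟨h1, h2⟩
    rcases (Tr.hy_nonneg T hT0).lt_or_eq with hs0 | hs0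
    · -- y T > 0
      have hKL := (D.hβKL (Tr.q n) hm).2 (Tr.y T) hs0
      exact aux_KL Tr.y hy0 (fun s hs => Tr.hy_nonneg s hs) (D.β (Tr.q n) (Tr.y T)) T K hT0
        hKL.1 hKL.2.1.antitoneOn (fun τ hτ => beta_nonneg D hm hs0.le hτ) hKL.2.2 hKbd hbd
    · -- y T = 0
      refine aux_KL Tr.y hy0 (fun s hs => Tr.hy_nonneg s hs) (fun _ => 0) T K hT0
        continuousOn_const (fun _ _ _ _ _ => le_rfl) (fun _ _ => le_rfl)
        tendsto_const_nhds hKbd ?_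
      intro s hs
      have := hbd s hs
      rwa [← hs0, beta_zero D hm (by linarith)] at this
  · -- y 0 = 0 : the output is identically zero on [0, ∞)
    have h0N : ((0 : ℕ) : ℕ∞) ≤ Tr.N := by simp
    have hq0 : Tr.q 0 = 0 := by
      by_contra h
      have h1 : 1 ≤ Tr.q 0 := by omega
      have := Delta_pos D h1 (Tr.hq_le 0 h0N)
      have := Tr.h_init_lo
      linarith [hy0]
    have hN1 : ¬ ((1 : ℕ) : ℕ∞) ≤ Tr.N := by
      intro h1
      have hcast : ((0 + 1 : ℕ) : ℕ∞) ≤ Tr.N := by exact_mod_cast h1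
      have ht1 : Tr.t 0 < Tr.t 1 := Tr.ht_lt 0 hcast
      have hb := Tr.h_bound 0 h0N (Tr.t 1) ht1.le (fun _ => le_rfl)
      rw [hv, Tr.ht0, ← hy0, hq0, beta_zero D (by omega) (by rw [Tr.ht0] at ht1; linarith)] at hb
      have hy1 : Tr.y (Tr.t 1) = 0 :=
        le_antisymm (by linarith) (Tr.hy_nonneg _ (by rw [Tr.ht0] at ht1; linarith))
      have hq1 : 1 ≤ Tr.q 1 := by
        have h2 := Tr.hq_ne 0 hcast
        rw [hq0] at h2
        exact Nat.one_le_iff_ne_zero.mpr h2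
      have hq1M : Tr.q 1 ≤ D.M := Tr.hq_le 1 hcast
      have hΔ1 : 0 < D.Δ (Tr.q 1) := Delta_pos D hq1 hq1M
      rcases lt_or_eq_of_le hq1M with h' | h'
      · have := (Tr.h_switch_lt 1 le_rfl hcast h').1; rw [hy1] at this; linarith
      · have := (Tr.h_switch_top 1 le_rfl hcast h').1; rw [hy1, ← h'] at this; linarith
    have hzero : ∀ s, 0 ≤ s → Tr.y s = 0 := by
      intro s hs
      have hb := Tr.h_bound 0 h0N s (by rw [Tr.ht0]; exact hs)
        (fun h => absurd (by exact_mod_cast h) hN1)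
      rw [hv, Tr.ht0, ← hy0, hq0, beta_zero D (by omega) (by linarith)] at hb
      exact le_antisymm (by linarith) (Tr.hy_nonneg s hs)
    constructor
    · refine ⟨fun a t => a * Real.exp (-t), ⟨?_, ?_⟩, ?_⟩
      · intro t _
        refine ⟨(continuous_id.mul continuous_const).continuousOn, ?_, by simp⟩
        intro a _ b _ hab
        exact mul_lt_mul_of_pos_right hab (Real.exp_pos _)
      · intro s hs
        refine ⟨(continuous_const.mul (Real.continuous_exp.comp continuous_neg)).continuousOn,
          ?_, ?_⟩
        · intro a _ b _ hab
          exact mul_lt_mul_of_pos_left (Real.exp_lt_exp.mpr (by linarith)) hs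
        · have : Tendsto (fun t : ℝ => Real.exp (-t)) atTop (nhds 0) :=
            Real.tendsto_exp_atBot.comp tendsto_neg_atTop_atBot
          simpa using this.const_mul s
      · intro s hs
        rw [hzero s hs, ← hy0]
        simp [Real.exp_pos]
    · refine tendsto_const_nhds.congr' ?_
      filter_upwards [eventually_ge_atTop (0:ℝ)] with s hs
      exact (hzero s hs).symm
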